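/- arXiv:2604.24754 — 2 statements merged into one kernel-verified Lean document; each statement's English description precedes it below -/
import Mathlib

section
/- For every complex s with Re s > log N / log b and every integer m ≥ 1, the moments satisfy the recurrence u_m(s) = (b^{m+s} − N)^{−1} Σ_{j=1}^m C(m,j) (Σ_{a∈A} a^j) u_{m−j}(s), where C(m,j) is the binomial coefficient. -/
open Finset

noncomputable section

/-- The rational point a₁/b + ⋯ + a_l/b^l attached to a digit tuple. -/
def digitVal (b l : ℕ) (a : Fin l → ℕ) : ℝ :=
  ∑ i : Fin l, (a i : ℝ) / (b : ℝ) ^ ((i : ℕ) + 1)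

/-- The finset of digit tuples of length l with entries in A. -/
def tuples (A : Finset ℕ) (l : ℕ) : Finset (Fin l → ℕ) :=
  Fintype.piFinset fun _ => A

/-- The moments u_m(s) = Σ_l Σ_{(a₁,…,a_l)∈A^l} (a₁/b+⋯+a_l/b^l)^m b^{−ls}
(the l = 0 term is 0^m, with 0^0 = 1). -/
def moment (b : ℕ) (A : Finset ℕ) (s : ℂ) (m : ℕ) : ℂ :=
  ∑' l : ℕ, ∑ a ∈ tuples A l, ((digitVal b l a ^ m : ℝ) : ℂ) * (b : ℂ) ^ (-(l : ℂ) * s)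

/-- One level of the series defining `moment`. -/
def mterm (b : ℕ) (A : Finset ℕ) (s : ℂ) (m l : ℕ) : ℂ :=
  ∑ a ∈ tuples A l, ((digitVal b l a ^ m : ℝ) : ℂ) * (b : ℂ) ^ (-(l : ℂ) * s)

lemma moment_eq_tsum (b : ℕ) (A : Finset ℕ) (s : ℂ) (m : ℕ) :
    moment b A s m = ∑' l, mterm b A s m l := rfl

lemma digitVal_nonneg (b l : ℕ) (a : Fin l → ℕ) : 0 ≤ digitVal b l a := by
  refine Finset.sum_nonneg fun i _ => ?_
  positivity

lemma digitVal_cons (b : ℕ) (hb : b ≠ 0) (l : ℕ) (a0 : ℕ) (t : Fin l → ℕ) :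
    digitVal b (l + 1) (Fin.cons a0 t) = ((a0 : ℝ) + digitVal b l t) / b := by
  have hb' : (b : ℝ) ≠ 0 := Nat.cast_ne_zero.mpr hb
  rw [digitVal, digitVal, Fin.sum_univ_succ, add_div, Finset.sum_div]
  simp only [Fin.cons_zero, Fin.cons_succ, Fin.val_zero, Fin.val_succ]
  congr 1
  · norm_num
  · refine Finset.sum_congr rfl fun i _ => ?_
    rw [pow_succ, div_div]

lemma digitVal_le_one (b : ℕ) (hb : 1 ≤ b) (l : ℕ) (a : Fin l → ℕ) (h : ∀ i, a i < b) :
    digitVal b l a ≤ 1 := by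
  induction l with
  | zero => simp [digitVal]
  | succ n ih =>
    have hb' : (0 : ℝ) < b := by exact_mod_cast Nat.lt_of_lt_of_le Nat.zero_lt_one hb
    have := digitVal_cons b (by omega) n (a 0) (Fin.tail a)
    rw [Fin.cons_self_tail] at this
    rw [this, div_le_one hb']
    have h1 : (a 0 : ℝ) ≤ (b : ℝ) - 1 := by
      have := h 0; have : a 0 ≤ b - 1 := by omega
      have hcast : (a 0 : ℝ) ≤ ((b - 1 : ℕ) : ℝ) := by exact_mod_cast this
      rw [Nat.cast_sub hb] at hcast; simpa using hcast
    have h2 : digitVal b n (Fin.tail a) ≤ 1 := ih (Fin.tail a) fun i => h i.succ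
    linarith

lemma sum_tuples_succ (A : Finset ℕ) (l : ℕ) (f : (Fin (l + 1) → ℕ) → ℂ) :
    ∑ p ∈ tuples A (l + 1), f p = ∑ a ∈ A, ∑ t ∈ tuples A l, f (Fin.cons a t) := by
  rw [← Finset.sum_product']
  refine Finset.sum_nbij' (fun p => ((p 0 : ℕ), Fin.tail p)) (fun q => Fin.cons q.1 q.2)
    ?_ ?_ ?_ ?_ ?_
  · intro p hp
    simp only [tuples, Fintype.mem_piFinset] at hp
    simp only [Finset.mem_product, tuples, Fintype.mem_piFinset]
    exact ⟨hp 0, fun i => hp i.succ⟩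
  · intro q hq
    simp only [Finset.mem_product, tuples, Fintype.mem_piFinset] at hq
    simp only [tuples, Fintype.mem_piFinset]
    intro i
    refine Fin.cases ?_ ?_ i
    · simpa using hq.1
    · intro j; simpa using hq.2 j
  · intro p _; exact Fin.cons_self_tail p
  · intro q _; simp
  · intro p _; rw [Fin.cons_self_tail]

lemma norm_cpow_nat (b : ℕ) (hb : 0 < b) (w : ℂ) :
    ‖(b : ℂ) ^ w‖ = (b : ℝ) ^ w.re := by
  rw [← Complex.ofReal_natCast,
    Complex.norm_cpow_eq_rpow_re_of_pos (by exact_mod_cast hb)]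

lemma mterm_norm_le (b : ℕ) (hb : 2 ≤ b) (A : Finset ℕ) (hAb : A ⊆ Finset.range b)
    (s : ℂ) (m l : ℕ) :
    ‖mterm b A s m l‖ ≤ ((A.card : ℝ) * (b : ℝ) ^ (-s.re)) ^ l := by
  have hb0 : (0 : ℝ) < b := by exact_mod_cast (by omega : 0 < b)
  calc ‖mterm b A s m l‖
      ≤ ∑ a ∈ tuples A l, ‖((digitVal b l a ^ m : ℝ) : ℂ) * (b : ℂ) ^ (-(l : ℂ) * s)‖ :=
        norm_sum_le _ _
    _ ≤ ∑ a ∈ tuples A l, (b : ℝ) ^ (-(l : ℝ) * s.re) := by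
        refine Finset.sum_le_sum fun a ha => ?_
        rw [norm_mul]
        have h1 : ‖((digitVal b l a ^ m : ℝ) : ℂ)‖ ≤ 1 := by
          rw [Complex.norm_real, Real.norm_eq_abs,
            abs_of_nonneg (pow_nonneg (digitVal_nonneg b l a) m)]
          refine pow_le_one₀ (digitVal_nonneg b l a) ?_
          refine digitVal_le_one b (by omega) l a fun i => ?_
          simp only [tuples, Fintype.mem_piFinset] at ha
          simpa using hAb (ha i)
        have h2 : ‖(b : ℂ) ^ (-(l : ℂ) * s)‖ = (b : ℝ) ^ (-(l : ℝ) * s.re) := by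
          rw [norm_cpow_nat b (by omega)]
          congr 1
          simp [Complex.mul_re]
        rw [h2]
        calc ‖((digitVal b l a ^ m : ℝ) : ℂ)‖ * (b : ℝ) ^ (-(l : ℝ) * s.re)
            ≤ 1 * (b : ℝ) ^ (-(l : ℝ) * s.re) := by
              exact mul_le_mul_of_nonneg_right h1 (Real.rpow_nonneg hb0.le _)
          _ = (b : ℝ) ^ (-(l : ℝ) * s.re) := one_mul _
    _ = ((A.card : ℝ) * (b : ℝ) ^ (-s.re)) ^ l := by
        rw [Finset.sum_const, nsmul_eq_mul]
        have hcard : ((tuples A l).card : ℝ) = (A.card : ℝ) ^ l := by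
          rw [tuples, Fintype.card_piFinset_const]; push_cast; ring
        rw [hcard, mul_pow]
        congr 1
        rw [← Real.rpow_natCast ((b : ℝ) ^ (-s.re)) l, ← Real.rpow_mul hb0.le]
        congr 1
        ring

lemma ratio_lt_one (b : ℕ) (hb : 2 ≤ b) (A : Finset ℕ) (hA : A.Nonempty)
    (s : ℂ) (hs : Real.log A.card / Real.log b < s.re) :
    (A.card : ℝ) < (b : ℝ) ^ s.re := by
  have hb1 : (1 : ℝ) < b := by exact_mod_cast hb
  have hlogb : 0 < Real.log b := Real.log_pos hb1
  have hN : (0 : ℝ) < A.card := by exact_mod_cast hA.card_pos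
  rw [Real.lt_rpow_iff_log_lt hN (by linarith)]
  calc Real.log A.card = Real.log A.card / Real.log b * Real.log b := by field_simp
    _ < s.re * Real.log b := by exact mul_lt_mul_of_pos_right hs hlogb

lemma summable_mterm (b : ℕ) (hb : 2 ≤ b) (A : Finset ℕ) (hA : A.Nonempty)
    (hAb : A ⊆ Finset.range b) (s : ℂ) (hs : Real.log A.card / Real.log b < s.re) (m : ℕ) :
    Summable (mterm b A s m) := by
  have hb0 : (0 : ℝ) < b := by exact_mod_cast (by omega : 0 < b)
  set r : ℝ := (A.card : ℝ) * (b : ℝ) ^ (-s.re) with hr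
  have hr0 : 0 ≤ r := by positivity
  have hr1 : r < 1 := by
    rw [hr, Real.rpow_neg hb0.le, ← div_eq_mul_inv,
      div_lt_one (Real.rpow_pos_of_pos hb0 _)]
    exact ratio_lt_one b hb A hA s hs
  exact Summable.of_norm_bounded (summable_geometric_of_lt_one hr0 hr1)
    (fun l => mterm_norm_le b hb A hAb s m l)

lemma mterm_zero (b : ℕ) (A : Finset ℕ) (s : ℂ) (m : ℕ) (hm : 1 ≤ m) :
    mterm b A s m 0 = 0 := by
  have : digitVal b 0 = fun _ => 0 := by
    funext a; simp [digitVal]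
  simp [mterm, this, zero_pow (by omega : m ≠ 0)]

lemma cpow_nat_add (b : ℕ) (hb : 2 ≤ b) (s : ℂ) (l : ℕ) :
    (b : ℂ) ^ (-((l : ℕ) + 1 : ℕ) * s : ℂ) = (b : ℂ) ^ (-s) * (b : ℂ) ^ (-(l : ℂ) * s) := by
  have hb0 : (b : ℂ) ≠ 0 := by exact_mod_cast (by omega : b ≠ 0)
  rw [← Complex.cpow_add _ _ hb0]
  congr 1
  push_cast
  ring

lemma mterm_succ (b : ℕ) (hb : 2 ≤ b) (A : Finset ℕ) (s : ℂ) (m l : ℕ) :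
    mterm b A s m (l + 1) = (b : ℂ) ^ (-((m : ℂ) + s)) *
      ∑ j ∈ Finset.range (m + 1), (m.choose j : ℂ) * (∑ a ∈ A, (a : ℂ) ^ j) *
        mterm b A s (m - j) l := by
  have hb0 : (b : ℂ) ≠ 0 := by exact_mod_cast (by omega : b ≠ 0)
  have hbR : (b : ℝ) ≠ 0 := by exact_mod_cast (by omega : b ≠ 0)
  have hpow : (b : ℂ) ^ (-((m : ℂ) + s)) = ((b : ℂ) ^ m)⁻¹ * (b : ℂ) ^ (-s) := by
    rw [neg_add, Complex.cpow_add _ _ hb0, Complex.cpow_neg, Complex.cpow_natCast]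
  have key : ∀ a ∈ A, ∀ t ∈ tuples A l,
      ((digitVal b (l + 1) (Fin.cons a t) ^ m : ℝ) : ℂ) * (b : ℂ) ^ (-(((l + 1) : ℕ) : ℂ) * s)
        = ∑ j ∈ Finset.range (m + 1), (m.choose j : ℂ) * ((a : ℂ) ^ j) *
            (((digitVal b l t ^ (m - j) : ℝ)) : ℂ) * (((b : ℂ) ^ m)⁻¹ * (b : ℂ) ^ (-s)) *
            (b : ℂ) ^ (-(l : ℂ) * s) := by
    intro a _ t _
    rw [digitVal_cons b (by omega) l a t, cpow_nat_add b hb s l]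
    push_cast
    rw [div_pow, add_pow, Finset.sum_div, Finset.sum_mul]
    refine Finset.sum_congr rfl fun j hj => ?_
    ring
  rw [mterm, sum_tuples_succ]
  calc ∑ a ∈ A, ∑ t ∈ tuples A l,
        ((digitVal b (l + 1) (Fin.cons a t) ^ m : ℝ) : ℂ) * (b : ℂ) ^ (-(((l + 1) : ℕ) : ℂ) * s)
      = ∑ a ∈ A, ∑ t ∈ tuples A l, ∑ j ∈ Finset.range (m + 1),
          (m.choose j : ℂ) * ((a : ℂ) ^ j) * (((digitVal b l t ^ (m - j) : ℝ)) : ℂ) *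
            (((b : ℂ) ^ m)⁻¹ * (b : ℂ) ^ (-s)) * (b : ℂ) ^ (-(l : ℂ) * s) :=
        Finset.sum_congr rfl fun a ha => Finset.sum_congr rfl fun t ht => key a ha t ht
    _ = ∑ a ∈ A, ∑ j ∈ Finset.range (m + 1), ∑ t ∈ tuples A l,
          (m.choose j : ℂ) * ((a : ℂ) ^ j) * (((digitVal b l t ^ (m - j) : ℝ)) : ℂ) *
            (((b : ℂ) ^ m)⁻¹ * (b : ℂ) ^ (-s)) * (b : ℂ) ^ (-(l : ℂ) * s) :=
        Finset.sum_congr rfl fun a _ => Finset.sum_comm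
    _ = ∑ j ∈ Finset.range (m + 1), ∑ a ∈ A, ∑ t ∈ tuples A l,
          (m.choose j : ℂ) * ((a : ℂ) ^ j) * (((digitVal b l t ^ (m - j) : ℝ)) : ℂ) *
            (((b : ℂ) ^ m)⁻¹ * (b : ℂ) ^ (-s)) * (b : ℂ) ^ (-(l : ℂ) * s) :=
        Finset.sum_comm
    _ = (b : ℂ) ^ (-((m : ℂ) + s)) * ∑ j ∈ Finset.range (m + 1),
          (m.choose j : ℂ) * (∑ a ∈ A, (a : ℂ) ^ j) * mterm b A s (m - j) l := by
        rw [hpow, Finset.mul_sum]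
        refine Finset.sum_congr rfl fun j hj => ?_
        rw [mterm]
        simp only [Finset.mul_sum, Finset.sum_mul]
        rw [Finset.sum_comm]
        apply Finset.sum_congr rfl
        intro t _
        apply Finset.sum_congr rfl
        intro a _
        ring

/-- For Re s > log N / log b and m ≥ 1,
u_m(s) = (b^{m+s} − N)⁻¹ Σ_{j=1}^m C(m,j) (Σ_{a∈A} a^j) u_{m−j}(s). -/
theorem moment_recurrence
    (b : ℕ) (hb : 2 ≤ b) (A : Finset ℕ) (hA : A.Nonempty) (hAb : A ⊆ Finset.range b)
    (hf : 0 < A.max' hA)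
    (s : ℂ) (hs : Real.log A.card / Real.log b < s.re) (m : ℕ) (hm : 1 ≤ m) :
    moment b A s m = ((b : ℂ) ^ ((m : ℂ) + s) - (A.card : ℂ))⁻¹ *
      ∑ j ∈ Finset.Icc 1 m, (m.choose j : ℂ) * (∑ a ∈ A, (a : ℂ) ^ j) * moment b A s (m - j) := by
  have hb0 : (b : ℂ) ≠ 0 := by exact_mod_cast (by omega : b ≠ 0)
  have hb0R : (0 : ℝ) < b := by exact_mod_cast (by omega : 0 < b)
  have hsumm : ∀ k, Summable (mterm b A s k) := fun k => summable_mterm b hb A hA hAb s hs k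
  have h1 : moment b A s m = (b : ℂ) ^ (-((m : ℂ) + s)) * ∑ j ∈ Finset.range (m + 1),
      (m.choose j : ℂ) * (∑ a ∈ A, (a : ℂ) ^ j) * moment b A s (m - j) := by
    rw [moment_eq_tsum, Summable.tsum_eq_zero_add (hsumm m), mterm_zero b A s m hm, zero_add]
    calc ∑' l, mterm b A s m (l + 1)
        = ∑' l, (b : ℂ) ^ (-((m : ℂ) + s)) * ∑ j ∈ Finset.range (m + 1),
            (m.choose j : ℂ) * (∑ a ∈ A, (a : ℂ) ^ j) * mterm b A s (m - j) l :=
          tsum_congr fun l => mterm_succ b hb A s m l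
      _ = (b : ℂ) ^ (-((m : ℂ) + s)) * ∑' l, ∑ j ∈ Finset.range (m + 1),
            (m.choose j : ℂ) * (∑ a ∈ A, (a : ℂ) ^ j) * mterm b A s (m - j) l := tsum_mul_left
      _ = (b : ℂ) ^ (-((m : ℂ) + s)) * ∑ j ∈ Finset.range (m + 1), ∑' l,
            (m.choose j : ℂ) * (∑ a ∈ A, (a : ℂ) ^ j) * mterm b A s (m - j) l := by
          rw [Summable.tsum_finsetSum fun j _ => (hsumm (m - j)).mul_left _]
      _ = (b : ℂ) ^ (-((m : ℂ) + s)) * ∑ j ∈ Finset.range (m + 1),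
            (m.choose j : ℂ) * (∑ a ∈ A, (a : ℂ) ^ j) * moment b A s (m - j) := by
          congr 1
          exact Finset.sum_congr rfl fun j hj => by rw [tsum_mul_left, moment_eq_tsum]
  have hsplit : Finset.range (m + 1) = insert 0 (Finset.Icc 1 m) := by
    ext x; simp only [Finset.mem_range, Finset.mem_insert, Finset.mem_Icc]; omega
  rw [hsplit, Finset.sum_insert (by simp)] at h1
  have h0 : (m.choose 0 : ℂ) * (∑ a ∈ A, (a : ℂ) ^ 0) * moment b A s (m - 0)
      = (A.card : ℂ) * moment b A s m := by simp
  rw [h0] at h1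
  have hBne : (b : ℂ) ^ ((m : ℂ) + s) ≠ 0 := by
    simp only [ne_eq, Complex.cpow_eq_zero_iff, not_and_or, not_not]
    exact Or.inl hb0
  have hne : (b : ℂ) ^ ((m : ℂ) + s) - (A.card : ℂ) ≠ 0 := by
    intro h
    have heq : (b : ℂ) ^ ((m : ℂ) + s) = (A.card : ℂ) := sub_eq_zero.mp h
    have hnorm := congrArg norm heq
    rw [norm_cpow_nat b (by omega)] at hnorm
    simp only [Complex.norm_natCast] at hnorm
    have hre : ((m : ℂ) + s).re = (m : ℝ) + s.re := by simp
    have hlt : (A.card : ℝ) < (b : ℝ) ^ (((m : ℂ) + s).re) := by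
      rw [hre]
      have hstep : (b : ℝ) ^ s.re ≤ (b : ℝ) ^ ((m : ℝ) + s.re) := by
        rw [Real.rpow_le_rpow_left_iff (by exact_mod_cast hb : (1 : ℝ) < b)]
        have : (0 : ℝ) ≤ (m : ℝ) := by positivity
        linarith
      exact lt_of_lt_of_le (ratio_lt_one b hb A hA s hs) hstep
    rw [hnorm] at hlt
    exact lt_irrefl _ hlt
  rw [Complex.cpow_neg] at h1
  rw [eq_inv_mul_iff_mul_eq₀ hne]
  rw [eq_inv_mul_iff_mul_eq₀ hBne] at h1
  set u := moment b A s m with hu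
  set T := ∑ j ∈ Finset.Icc 1 m, (m.choose j : ℂ) * (∑ a ∈ A, (a : ℂ) ^ j) * moment b A s (m - j)
  linear_combination h1
end
end

section
/- Let f = max A (possibly f < b−1), κ = (b−1)/f, and let s be a complex number with Re s > log N / log b. Then for every real m > 0: m^s γ_B(−κm) e^{−m} E(κm) = Σ_{l=0}^∞ γ_B(−κ m b^{−l}) e^{−m b^{−l}} (m b^{−l})^s, and this series converges absolutely. -/
open Finset

noncomputable section

/-- E(t) = 1 + Σ_{l≥1} Σ_{(a₁,…,a_l)∈A^l} e^{t(a₁/b+⋯+a_l/b^l)} b^{−ls}. -/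
def egf (b : ℕ) (A : Finset ℕ) (s : ℂ) (t : ℝ) : ℂ :=
  ∑' l : ℕ, ∑ a ∈ tuples A l, ((Real.exp (t * digitVal b l a) : ℝ) : ℂ) * (b : ℂ) ^ (-(l : ℂ) * s)

/-- α_B(t) = Σ_{d∈B} e^{dt}. -/
def alphaB (B : Finset ℕ) (t : ℝ) : ℝ := ∑ d ∈ B, Real.exp (d * t)

/-- γ_B(−t) = Π_{i≥0} α_B(−b^i t), as a function of t. -/
def gammaNeg (b : ℕ) (B : Finset ℕ) (t : ℝ) : ℝ := ∏' i : ℕ, alphaB B (-((b : ℝ) ^ i * t))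

/-- The l-th term γ_B(−κmb^{−l}) e^{−mb^{−l}} (mb^{−l})^s of the series in Statement 14. -/
def kappaTerm (b : ℕ) (B : Finset ℕ) (κ : ℝ) (s : ℂ) (m : ℝ) (l : ℕ) : ℂ :=
  ((gammaNeg b B (κ * m * (b : ℝ) ^ (-(l : ℤ))) : ℝ) : ℂ) *
    ((Real.exp (-(m * (b : ℝ) ^ (-(l : ℤ)))) : ℝ) : ℂ) *
    ((m * (b : ℝ) ^ (-(l : ℤ)) : ℝ) : ℂ) ^ s

section helpers

variable {b : ℕ}

lemma summable_exp_pow (hb : 2 ≤ b) {u : ℝ} (hu : 0 < u) :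
    Summable fun i : ℕ => Real.exp (-((b:ℝ)^i * u)) := by
  have hgeo : Summable fun i : ℕ => Real.exp (-u) * Real.exp (-u) ^ i :=
    (summable_geometric_of_lt_one (Real.exp_pos (-u)).le
      (by rw [Real.exp_lt_one_iff]; linarith)).mul_left _
  refine Summable.of_nonneg_of_le (fun i => (Real.exp_pos _).le) (fun i => ?_) hgeo
  rw [← Real.exp_nat_mul, ← Real.exp_add, Real.exp_le_exp]
  have h1 : (i:ℝ) + 1 ≤ (b:ℝ)^i := by
    have := Nat.lt_pow_self (n := i) (by omega : 1 < b)
    exact_mod_cast Nat.succ_le_of_lt this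
  nlinarith

lemma alphaB_eq {B : Finset ℕ} (h0 : 0 ∈ B) (v : ℝ) :
    alphaB B (-v) = 1 + ∑ d ∈ B.erase 0, Real.exp (-((d:ℝ) * v)) := by
  rw [alphaB, ← Finset.add_sum_erase _ _ h0]
  simp [mul_comm]

lemma alphaB_pos {B : Finset ℕ} (h0 : 0 ∈ B) (v : ℝ) : 0 < alphaB B (-v) := by
  rw [alphaB_eq h0]
  have : 0 ≤ ∑ d ∈ B.erase 0, Real.exp (-((d:ℝ) * v)) :=
    Finset.sum_nonneg fun d _ => (Real.exp_pos _).le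
  linarith

lemma alphaB_one_le {B : Finset ℕ} (h0 : 0 ∈ B) (v : ℝ) : 1 ≤ alphaB B (-v) := by
  rw [alphaB_eq h0]
  have : 0 ≤ ∑ d ∈ B.erase 0, Real.exp (-((d:ℝ) * v)) :=
    Finset.sum_nonneg fun d _ => (Real.exp_pos _).le
  linarith

lemma summable_log_alphaB (hb : 2 ≤ b) {B : Finset ℕ} (h0 : 0 ∈ B) {u : ℝ} (hu : 0 < u) :
    Summable fun i : ℕ => Real.log (alphaB B (-((b:ℝ)^i * u))) := by
  have hbd : ∀ i : ℕ, Real.log (alphaB B (-((b:ℝ)^i * u)))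
      ≤ (B.card : ℝ) * Real.exp (-((b:ℝ)^i * u)) := by
    intro i
    have hpos : (0:ℝ) < (b:ℝ)^i * u := by positivity
    refine le_trans (Real.log_le_sub_one_of_pos (alphaB_pos h0 _)) ?_
    rw [alphaB_eq h0]
    have h1 : ∑ d ∈ B.erase 0, Real.exp (-((d:ℝ) * ((b:ℝ)^i * u)))
        ≤ ∑ _d ∈ B.erase 0, Real.exp (-((b:ℝ)^i * u)) := by
      refine Finset.sum_le_sum fun d hd => ?_
      have hd1 : 1 ≤ d := Nat.one_le_iff_ne_zero.mpr (Finset.mem_erase.mp hd).1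
      have : (1:ℝ) ≤ (d:ℝ) := by exact_mod_cast hd1
      rw [Real.exp_le_exp]
      nlinarith
    have h2 : ((B.erase 0).card : ℝ) ≤ (B.card : ℝ) := by
      exact_mod_cast Finset.card_le_card (Finset.erase_subset _ _)
    calc 1 + ∑ d ∈ B.erase 0, Real.exp (-((d:ℝ) * ((b:ℝ)^i * u))) - 1
        ≤ ∑ _d ∈ B.erase 0, Real.exp (-((b:ℝ)^i * u)) := by linarith
      _ = ((B.erase 0).card : ℝ) * Real.exp (-((b:ℝ)^i * u)) := by
          rw [Finset.sum_const, nsmul_eq_mul]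
      _ ≤ (B.card : ℝ) * Real.exp (-((b:ℝ)^i * u)) := by
          have := (Real.exp_pos (-((b:ℝ)^i * u))).le
          nlinarith
  refine Summable.of_nonneg_of_le (fun i => ?_) hbd ((summable_exp_pow hb hu).mul_left _)
  exact Real.log_nonneg (alphaB_one_le h0 _)

lemma gammaNeg_eq_exp (hb : 2 ≤ b) {B : Finset ℕ} (h0 : 0 ∈ B) {u : ℝ} (hu : 0 < u) :
    gammaNeg b B u = Real.exp (∑' i : ℕ, Real.log (alphaB B (-((b:ℝ)^i * u)))) := by
  have hs := (summable_log_alphaB hb h0 hu).hasSum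
  have hp := hs.rexp
  have hfun : (Real.exp ∘ fun i : ℕ => Real.log (alphaB B (-((b:ℝ)^i * u))))
      = fun i : ℕ => alphaB B (-((b:ℝ)^i * u)) :=
    funext fun i => Real.exp_log (alphaB_pos h0 _)
  rw [hfun] at hp
  exact hp.tprod_eq

lemma gammaNeg_pos (hb : 2 ≤ b) {B : Finset ℕ} (h0 : 0 ∈ B) {u : ℝ} (hu : 0 < u) :
    0 < gammaNeg b B u := by
  rw [gammaNeg_eq_exp hb h0 hu]; exact Real.exp_pos _

lemma gammaNeg_shift (hb : 2 ≤ b) {B : Finset ℕ} (h0 : 0 ∈ B) {u : ℝ} (hu : 0 < u) (l : ℕ) :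
    gammaNeg b B (u * (b:ℝ)^(-(l:ℤ))) =
      (∏ j ∈ Finset.range l, alphaB B (-(u * (b:ℝ)^(-(j:ℤ)-1)))) * gammaNeg b B u := by
  have hb0 : (0:ℝ) < b := by exact_mod_cast (by omega : 0 < b)
  have hb0' : (b:ℝ) ≠ 0 := ne_of_gt hb0
  have hv : 0 < u * (b:ℝ)^(-(l:ℤ)) := by positivity
  have harg : ∀ i : ℕ, (b:ℝ)^i * (u * (b:ℝ)^(-(l:ℤ))) = u * (b:ℝ)^((i:ℤ) - l) := by
    intro i
    rw [zpow_sub₀ hb0', zpow_natCast]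
    field_simp
    ring_nf
    simp [zpow_neg, hb0']
  have hfun : (fun i : ℕ => Real.log (alphaB B (-((b:ℝ)^i * (u * (b:ℝ)^(-(l:ℤ)))))))
      = fun i : ℕ => Real.log (alphaB B (-(u * (b:ℝ)^((i:ℤ) - l)))) := by
    funext i; rw [harg i]
  have hsum : Summable fun i : ℕ => Real.log (alphaB B (-(u * (b:ℝ)^((i:ℤ) - l)))) := by
    rw [← hfun]; exact summable_log_alphaB hb h0 hv
  have hsplit := (Summable.sum_add_tsum_nat_add l hsum).symm
  have htail : ∀ i : ℕ, Real.log (alphaB B (-(u * (b:ℝ)^(((i + l :ℕ):ℤ) - l))))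
      = Real.log (alphaB B (-((b:ℝ)^i * u))) := by
    intro i
    congr 2
    have : ((i + l :ℕ):ℤ) - l = (i:ℤ) := by push_cast; ring
    rw [this, zpow_natCast]; ring
  rw [gammaNeg_eq_exp hb h0 hv, hfun, hsplit, Real.exp_add]
  congr 1
  · rw [Real.exp_sum]
    have e1 : ∏ i ∈ Finset.range l, Real.exp (Real.log (alphaB B (-(u * (b:ℝ)^((i:ℤ) - l)))))
        = ∏ i ∈ Finset.range l, alphaB B (-(u * (b:ℝ)^((i:ℤ) - l))) :=
      Finset.prod_congr rfl fun i _ => Real.exp_log (alphaB_pos h0 _)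
    rw [e1, ← Finset.prod_range_reflect (fun i => alphaB B (-(u * (b:ℝ)^((i:ℤ) - l)))) l]
    refine Finset.prod_congr rfl fun j hj => ?_
    have hjl := Finset.mem_range.mp hj
    congr 3
    have : ((l - 1 - j : ℕ) : ℤ) = (l:ℤ) - 1 - j := by omega
    rw [this]; ring
  · rw [gammaNeg_eq_exp hb h0 hu]
    congr 1
    exact tsum_congr htail

end helpers

/-- Let f = max A (possibly f < b−1), κ = (b−1)/f, Re s > log N / log b.
For every m > 0, m^s γ_B(−κm) e^{−m} E(κm) = Σ_{l≥0} γ_B(−κmb^{−l}) e^{−mb^{−l}} (mb^{−l})^s,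
the series converging absolutely. -/
theorem kappa_egf_expansion
    (b : ℕ) (hb : 2 ≤ b) (A : Finset ℕ) (hA : A.Nonempty) (hAb : A ⊆ Finset.range b)
    (f : ℕ) (hfA : f ∈ A) (hfmax : ∀ a ∈ A, a ≤ f) (hf0 : 0 < f)
    (s : ℂ) (hs : Real.log A.card / Real.log b < s.re) (m : ℝ) (hm : 0 < m) :
    (((m : ℝ) : ℂ) ^ s *
        ((gammaNeg b (A.image fun a => f - a) (((b : ℝ) - 1) / (f : ℝ) * m) : ℝ) : ℂ) *
        ((Real.exp (-m) : ℝ) : ℂ) * egf b A s (((b : ℝ) - 1) / (f : ℝ) * m)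
      = ∑' l : ℕ, kappaTerm b (A.image fun a => f - a) (((b : ℝ) - 1) / (f : ℝ)) s m l)
    ∧ Summable (fun l : ℕ =>
        ‖kappaTerm b (A.image fun a => f - a) (((b : ℝ) - 1) / (f : ℝ)) s m l‖) := by
  classical
  have hb0 : (0:ℝ) < b := by exact_mod_cast (by omega : 0 < b)
  have hb1 : (1:ℝ) < b := by exact_mod_cast (by omega : 1 < b)
  have hb0' : (b:ℝ) ≠ 0 := ne_of_gt hb0
  have hfR : (0:ℝ) < f := by exact_mod_cast hf0
  set κ : ℝ := ((b:ℝ)-1)/(f:ℝ) with hκdef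
  set t : ℝ := κ * m with htdef
  set B : Finset ℕ := A.image (fun a => f - a) with hBdef
  have hκpos : 0 < κ := div_pos (by linarith) hfR
  have ht : 0 < t := mul_pos hκpos hm
  have h0B : 0 ∈ B := Finset.mem_image.mpr ⟨f, hfA, by omega⟩
  have hft : (f:ℝ) * t = ((b:ℝ)-1) * m := by
    rw [htdef, hκdef]; field_simp
  -- alpha as sum over A
  have alpha_sum : ∀ v : ℝ, alphaB B (-v) = ∑ a ∈ A, Real.exp (-(((f:ℝ) - a) * v)) := by
    intro v
    rw [hBdef, alphaB, Finset.sum_image (by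
      intro a ha a' ha' h
      have := hfmax a ha; have := hfmax a' ha'; simp only at h; omega)]
    refine Finset.sum_congr rfl fun a ha => ?_
    congr 1
    rw [Nat.cast_sub (hfmax a ha)]
    ring
  clear_value κ t B
  -- geometric identity
  have geom : ∀ l : ℕ, ((b:ℝ)-1) * ∑ j ∈ Finset.range l, (b:ℝ)^(-(j:ℤ)-1)
      = 1 - (b:ℝ)^(-(l:ℤ)) := by
    intro l
    induction l with
    | zero => simp
    | succ n ih =>
      rw [Finset.sum_range_succ, mul_add, ih]
      have e1 : (b:ℝ)^(-(n:ℤ)-1) = (b:ℝ)^(-(n:ℤ)) / (b:ℝ) := by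
        rw [zpow_sub₀ hb0', zpow_one]
      have e2 : (b:ℝ)^(-((n+1:ℕ):ℤ)) = (b:ℝ)^(-(n:ℤ)) / (b:ℝ) := by
        rw [show (-((n+1:ℕ):ℤ)) = -(n:ℤ) - 1 by push_cast; ring, zpow_sub₀ hb0', zpow_one]
      rw [e1, e2]
      field_simp
      ring
  have hwpow : ∀ i : ℕ, (b:ℝ)^(-(i:ℤ)-1) = ((b:ℝ)^(i+1))⁻¹ := by
    intro i
    rw [show (-(i:ℤ)-1) = -((i+1:ℕ):ℤ) by push_cast; ring, zpow_neg, zpow_natCast]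
  -- key real identity
  have key : ∀ l : ℕ,
      (∏ j ∈ Finset.range l, alphaB B (-(t * (b:ℝ)^(-(j:ℤ)-1))))
          * Real.exp (-(m * (b:ℝ)^(-(l:ℤ))))
        = (∑ p ∈ tuples A l, Real.exp (t * digitVal b l p)) * Real.exp (-m) := by
    intro l
    have step1 : (∏ j ∈ Finset.range l, alphaB B (-(t * (b:ℝ)^(-(j:ℤ)-1))))
        = ∑ p ∈ tuples A l, ∏ i : Fin l,
            Real.exp (-(((f:ℝ) - p i) * (t * (b:ℝ)^(-((i:ℕ):ℤ)-1)))) := by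
      rw [← Fin.prod_univ_eq_prod_range (fun j => alphaB B (-(t * (b:ℝ)^(-(j:ℤ)-1)))) l]
      simp only [alpha_sum]
      exact Finset.prod_univ_sum _ _
    rw [step1, Finset.sum_mul, Finset.sum_mul]
    refine Finset.sum_congr rfl fun p hp => ?_
    have hpA : ∀ i : Fin l, p i ∈ A := fun i => (Fintype.mem_piFinset.mp hp) i
    rw [← Real.exp_sum, ← Real.exp_add, ← Real.exp_add]
    congr 1
    have hdv : digitVal b l p = ∑ i : Fin l, (p i : ℝ) * (b:ℝ)^(-((i:ℕ):ℤ)-1) := by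
      rw [digitVal]
      refine Finset.sum_congr rfl fun i _ => ?_
      rw [hwpow, div_eq_mul_inv]
    have hsplit : ∑ i : Fin l, -(((f:ℝ) - p i) * (t * (b:ℝ)^(-((i:ℕ):ℤ)-1)))
        = t * (∑ i : Fin l, (p i:ℝ) * (b:ℝ)^(-((i:ℕ):ℤ)-1))
          - (f:ℝ) * t * (∑ j ∈ Finset.range l, (b:ℝ)^(-(j:ℤ)-1)) := by
      rw [← Fin.sum_univ_eq_sum_range (fun j => (b:ℝ)^(-(j:ℤ)-1)) l,
        Finset.mul_sum, Finset.mul_sum, ← Finset.sum_sub_distrib]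
      exact Finset.sum_congr rfl fun i _ => by ring
    rw [hsplit, ← hdv]
    have hG := geom l
    linear_combination (-m) * hG + (-(∑ j ∈ Finset.range l, (b:ℝ)^(-(j:ℤ)-1))) * hft
  -- cpow splitting
  have hlogb : Complex.log (b:ℂ) = ((Real.log b : ℝ) : ℂ) := by
    rw [← Complex.ofReal_natCast, Complex.ofReal_log hb0.le]
  have hcpow : ∀ l : ℕ, (((m * (b:ℝ)^(-(l:ℤ)) : ℝ)) : ℂ) ^ s
      = ((m:ℝ):ℂ)^s * (b:ℂ)^(-(l:ℂ) * s) := by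
    intro l
    have hzpos : (0:ℝ) ≤ (b:ℝ)^(-(l:ℤ)) := le_of_lt (by positivity)
    rw [Complex.ofReal_mul, Complex.mul_cpow_ofReal_nonneg hm.le hzpos]
    congr 1
    have h1 : ((((b:ℝ)^(-(l:ℤ)) : ℝ)) : ℂ) = (b:ℂ) ^ (-(l:ℂ)) := by
      rw [Complex.ofReal_zpow]
      rw [show ((b:ℝ):ℂ) = (b:ℂ) by push_cast; rfl]
      rw [show (-(l:ℂ)) = ((-(l:ℤ) : ℤ):ℂ) by push_cast; ring]
      exact (Complex.cpow_intCast _ _).symm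
    have him : (Complex.log (b:ℂ) * (-(l:ℂ))).im = 0 := by
      have h0 : (Complex.log (b:ℂ)).im = 0 := by rw [hlogb]; exact Complex.ofReal_im _
      simp [Complex.mul_im, h0]
    have hmn : (b:ℂ) ^ (-(l:ℂ) * s) = ((b:ℂ) ^ (-(l:ℂ))) ^ s :=
      Complex.cpow_mul _ (by rw [him]; linarith [Real.pi_pos]) (by rw [him]; linarith [Real.pi_pos])
    rw [h1, ← hmn]
  -- norm of the b-power
  have hnorm : ∀ l : ℕ, ‖(b:ℂ)^(-(l:ℂ) * s)‖ = ((b:ℝ) ^ (-s.re)) ^ l := by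
    intro l
    rw [show (b:ℂ) = ((b:ℝ):ℂ) by push_cast; rfl,
      Complex.norm_cpow_eq_rpow_re_of_pos hb0]
    rw [show (-(l:ℂ) * s).re = (-s.re) * (l:ℝ) by simp [Complex.mul_re]; ring]
    rw [Real.rpow_mul hb0.le, Real.rpow_natCast]
  -- the series terms
  set S : ℕ → ℂ := fun l => ∑ p ∈ tuples A l,
      ((Real.exp (t * digitVal b l p) : ℝ) : ℂ) * (b:ℂ) ^ (-(l:ℂ) * s) with hSdef
  set C : ℂ := ((m:ℝ):ℂ)^s * ((gammaNeg b B t : ℝ) : ℂ) * ((Real.exp (-m) : ℝ) : ℂ) with hCdef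
  -- termwise identity
  have termwise : ∀ l : ℕ, kappaTerm b B κ s m l = C * S l := by
    intro l
    have hκm : κ * m * (b:ℝ)^(-(l:ℤ)) = t * (b:ℝ)^(-(l:ℤ)) := by rw [htdef]
    have hk := congrArg (fun x : ℝ => (x:ℂ)) (key l)
    push_cast at hk
    simp only [kappaTerm, hκm, gammaNeg_shift hb h0B ht l, hcpow l, hSdef, hCdef]
    rw [← Finset.sum_mul]
    push_cast
    linear_combination (((gammaNeg b B t :ℝ):ℂ) * (((m:ℝ):ℂ)^s * (b:ℂ)^(-(l:ℂ)*s))) * hk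
  -- summability of the norms of S
  have hr0 : (0:ℝ) ≤ (A.card:ℝ) * (b:ℝ)^(-s.re) := by positivity
  have hr1 : (A.card:ℝ) * (b:ℝ)^(-s.re) < 1 := by
    have hN0 : (0:ℝ) < A.card := by exact_mod_cast hA.card_pos
    have hlogbR : 0 < Real.log b := Real.log_pos hb1
    have hNlt : (A.card:ℝ) < (b:ℝ) ^ s.re :=
      (Real.lt_rpow_iff_log_lt hN0 hb0).mpr (by
        have := (div_lt_iff₀ hlogbR).mp hs
        linarith)
    rw [Real.rpow_neg hb0.le, ← div_eq_mul_inv]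
    exact (div_lt_one (Real.rpow_pos_of_pos hb0 _)).mpr hNlt
  have hSbound : ∀ l : ℕ, ‖S l‖ ≤ Real.exp m * ((A.card:ℝ) * (b:ℝ)^(-s.re)) ^ l := by
    intro l
    have hdvle : ∀ p ∈ tuples A l, t * digitVal b l p ≤ m := by
      intro p hp
      have hpA : ∀ i : Fin l, p i ∈ A := fun i => (Fintype.mem_piFinset.mp hp) i
      set G : ℝ := ∑ j ∈ Finset.range l, (b:ℝ)^(-(j:ℤ)-1) with hGdef
      have hdvG : digitVal b l p ≤ (f:ℝ) * G := by
        rw [hGdef, ← Fin.sum_univ_eq_sum_range (fun j => (b:ℝ)^(-(j:ℤ)-1)) l,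
          Finset.mul_sum, digitVal]
        refine Finset.sum_le_sum fun i _ => ?_
        rw [hwpow, div_eq_mul_inv]
        have hple : ((p i:ℕ):ℝ) ≤ (f:ℝ) := by exact_mod_cast hfmax _ (hpA i)
        have : (0:ℝ) ≤ ((b:ℝ)^((i:ℕ)+1))⁻¹ := by positivity
        exact mul_le_mul_of_nonneg_right hple this
      have hfg : t * ((f:ℝ) * G) = m * (1 - (b:ℝ)^(-(l:ℤ))) := by
        have hG := geom l
        rw [hGdef]
        linear_combination m * hG + (∑ j ∈ Finset.range l, (b:ℝ)^(-(j:ℤ)-1)) * hft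
      have h1 : t * digitVal b l p ≤ t * ((f:ℝ) * G) :=
        mul_le_mul_of_nonneg_left hdvG ht.le
      have h2 : (0:ℝ) < (b:ℝ)^(-(l:ℤ)) := by positivity
      nlinarith
    calc ‖S l‖ ≤ ∑ p ∈ tuples A l,
          ‖((Real.exp (t * digitVal b l p) : ℝ) : ℂ) * (b:ℂ) ^ (-(l:ℂ) * s)‖ := by
          rw [hSdef]; exact norm_sum_le _ _
      _ ≤ ∑ _p ∈ tuples A l, Real.exp m * ((b:ℝ) ^ (-s.re)) ^ l := by
          refine Finset.sum_le_sum fun p hp => ?_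
          rw [norm_mul, hnorm l, Complex.norm_real, Real.norm_eq_abs,
            abs_of_pos (Real.exp_pos _)]
          have hle := Real.exp_le_exp.mpr (hdvle p hp)
          have hpow0 : (0:ℝ) ≤ ((b:ℝ) ^ (-s.re)) ^ l := by positivity
          exact mul_le_mul_of_nonneg_right hle hpow0
      _ = ((A.card : ℝ)) ^ l * (Real.exp m * ((b:ℝ) ^ (-s.re)) ^ l) := by
          rw [Finset.sum_const, nsmul_eq_mul]
          congr 1
          rw [tuples, Fintype.card_piFinset]
          push_cast
          simp
      _ = Real.exp m * ((A.card:ℝ) * (b:ℝ)^(-s.re)) ^ l := by rw [mul_pow]; ring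
  have hSsum : Summable fun l : ℕ => ‖S l‖ :=
    Summable.of_nonneg_of_le (fun l => norm_nonneg _) hSbound
      ((summable_geometric_of_lt_one hr0 hr1).mul_left _)
  constructor
  · have hegf : egf b A s t = ∑' l : ℕ, S l := by
      rw [egf, hSdef]
    rw [show (((m:ℝ):ℂ)^s * ((gammaNeg b B t : ℝ) : ℂ) * ((Real.exp (-m) : ℝ) : ℂ)
        * egf b A s t) = C * egf b A s t from by rw [hCdef]]
    rw [hegf, ← tsum_mul_left]
    exact tsum_congr fun l => (termwise l).symm
  · have heq : (fun l : ℕ => ‖kappaTerm b B κ s m l‖) = fun l : ℕ => ‖C‖ * ‖S l‖ := by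
      funext l
      rw [termwise l, norm_mul]
    rw [heq]
    exact hSsum.mul_left _
end
end
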